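/- If Dyck paths P and Q of size n have the same type, then mir(P) and mir(Q) have the same type. Consequently, if [P, Q] is a synchronized interval in the Tamari lattice, then [mir(Q), mir(P)] is also a synchronized interval. -/

import Mathlib

/-- A Dyck path: a word in `u = true`, `d = false` with equally many `u`'s and `d`'s,
every prefix of which has at least as many `u`'s as `d`'s. -/
def IsDyck (w : List Bool) : Prop :=
  w.count true = w.count false ∧ ∀ p, p <+: w → p.count false ≤ p.count true

/-- The number of non-initial contacts of a path: the number of nonempty balanced
prefixes. -/
def ncontacts (w : List Bool) : ℕ :=
  ((List.range w.length).filter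
    (fun j => (w.take (j + 1)).count true = (w.take (j + 1)).count false)).length

/-- The involution `mir` on Dyck paths, defined recursively by `mir ε = ε` and
`mir (D₁ u D₂ d) = mir D₂ u mir D₁ d`, where a nonempty Dyck path is uniquely
written `D₁ u D₂ d` with `D₁, D₂` Dyck paths and `D₂` starting right after the
last non-initial contact before the endpoint (so `D₁` is the longest proper
balanced prefix). -/
def mir (w : List Bool) : List Bool :=
  if hw : w = [] then []
  else
    let e := w.dropLast
    let j := ((List.range e.length).filter
      (fun j => (e.take j).count true = (e.take j).count false)).foldr max 0
    mir (e.drop (j + 1)) ++ true :: (mir (e.take j) ++ [false])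
termination_by w.length
decreasing_by
  all_goals
    have hp := List.length_pos_iff.mpr hw
    simp only [List.length_drop, List.length_take, List.length_dropLast]
    omega

/-- The Tamari covering relation: `D = V d D₁ W` covers `D' = V D₁ d W`, where `D₁`
is a nonempty Dyck path. `TCov D D'` means `D` covers `D'`. -/
inductive TCov : List Bool → List Bool → Prop where
  | mk (V W D1 : List Bool) (h : IsDyck D1) (hne : D1 ≠ []) :
      TCov (V ++ false :: (D1 ++ W)) (V ++ D1 ++ false :: W)

/-- The Tamari order: reflexive-transitive closure of the covering relation
(`TamariLE D' D` holds when `D' ⪯ D`). -/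
def TamariLE : List Bool → List Bool → Prop :=
  Relation.ReflTransGen (fun x y => TCov y x)

/-- For each up step (except one at the very last position), record whether it is
immediately followed by an up step. The type of a Dyck path of size `n` is the
first `n - 1` of these entries, i.e. `(dtype w).dropLast` (`true` codes `E`). -/
def dtype : List Bool → List Bool
  | [] => []
  | [_] => []
  | a :: b :: rest => if a then b :: dtype (b :: rest) else dtype (b :: rest)

/-- Two Dyck paths have the same type. -/
def TypeEq (P Q : List Bool) : Prop := (dtype P).dropLast = (dtype Q).dropLast

/-- A synchronized interval: a pair of nonempty Dyck paths of the same size, comparable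
in the Tamari order, with the same type. -/
def Synchronized (P Q : List Bool) : Prop :=
  IsDyck P ∧ IsDyck Q ∧ P ≠ [] ∧ P.count true = Q.count true ∧
    TamariLE P Q ∧ TypeEq P Q

open List in
/-- height -/
def ht (w : List Bool) : ℤ := (w.count true : ℤ) - w.count false

lemma ht_nil : ht [] = 0 := rfl

lemma ht_append (a b : List Bool) : ht (a ++ b) = ht a + ht b := by
  simp [ht, List.count_append]; ring

lemma ht_cons (b : Bool) (l : List Bool) :
    ht (b :: l) = (if b then 1 else -1) + ht l := by
  cases b <;> simp [ht, List.count_cons] <;> ring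

lemma ht_true : ht [true] = 1 := rfl
lemma ht_false : ht [false] = -1 := rfl

lemma isDyck_iff {w : List Bool} :
    IsDyck w ↔ ht w = 0 ∧ ∀ p, p <+: w → 0 ≤ ht p := by
  unfold IsDyck ht
  constructor
  · rintro ⟨h1, h2⟩
    refine ⟨by omega, fun p hp => ?_⟩
    have := h2 p hp; omega
  · rintro ⟨h1, h2⟩
    refine ⟨by omega, fun p hp => ?_⟩
    have := h2 p hp; omega

lemma IsDyck.ht_eq {w : List Bool} (h : IsDyck w) : ht w = 0 :=
  (isDyck_iff.1 h).1

lemma IsDyck.ht_prefix {w p : List Bool} (h : IsDyck w) (hp : p <+: w) : 0 ≤ ht p :=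
  (isDyck_iff.1 h).2 p hp

lemma isDyck_nil : IsDyck ([] : List Bool) :=
  ⟨rfl, fun p hp => by simp [List.prefix_nil.mp hp]⟩

lemma prefix_split {p A B : List Bool} (h : p <+: A ++ B) :
    p <+: A ∨ ∃ q, q <+: B ∧ p = A ++ q := by
  induction A generalizing p with
  | nil => exact Or.inr ⟨p, by simpa using h, by simp⟩
  | cons a A ih =>
    cases p with
    | nil => exact Or.inl (List.nil_prefix)
    | cons x p =>
      rw [List.cons_append, List.cons_prefix_cons] at h
      obtain ⟨rfl, h⟩ := h
      rcases ih h with h1 | ⟨q, hq, rfl⟩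
      · exact Or.inl (List.cons_prefix_cons.2 ⟨rfl, h1⟩)
      · exact Or.inr ⟨q, hq, by simp⟩

lemma prefix_cons_split {p : List Bool} {a : Bool} {l : List Bool} (h : p <+: a :: l) :
    p = [] ∨ ∃ q, q <+: l ∧ p = a :: q := by
  cases p with
  | nil => exact Or.inl rfl
  | cons x p =>
    rw [List.cons_prefix_cons] at h
    exact Or.inr ⟨p, h.2, by rw [h.1]⟩

/-- Dyck words are closed under the node construction. -/
lemma isDyck_node {A B : List Bool} (hA : IsDyck A) (hB : IsDyck B) :
    IsDyck (A ++ true :: (B ++ [false])) := by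
  rw [isDyck_iff]
  constructor
  · rw [ht_append, ht_cons, ht_append, hA.ht_eq, hB.ht_eq]; simp [ht]
  · intro p hp
    rcases prefix_split hp with h1 | ⟨q, hq, rfl⟩
    · exact hA.ht_prefix h1
    · rcases prefix_cons_split hq with rfl | ⟨r, hr, rfl⟩
      · simp [ht_append, hA.ht_eq]
      · rcases prefix_split hr with h2 | ⟨s, hs, rfl⟩
        · have := hB.ht_prefix h2
          rw [ht_append, ht_cons, hA.ht_eq]
          simp; omega
        · have hs' : ht s = 0 ∨ ht s = -1 := by
            rcases prefix_cons_split hs with rfl | ⟨t, ht', rfl⟩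
            · exact Or.inl rfl
            · simp at ht'; subst ht'; right; rfl
          rw [ht_append, ht_cons, ht_append, hA.ht_eq, hB.ht_eq]
          rcases hs' with h | h <;> rw [h] <;> simp

lemma dyck_getLast {w : List Bool} (hw : IsDyck w) (hne : w ≠ []) :
    ∃ e, w = e ++ [false] := by
  obtain ⟨e, b, hw'⟩ := List.eq_nil_or_concat w |>.resolve_left hne
  rw [List.concat_eq_append] at hw'
  subst hw'
  refine ⟨e, ?_⟩
  have h1 := hw.ht_eq
  have h2 := hw.ht_prefix (List.prefix_append e [b])
  rw [ht_append] at h1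
  cases b
  · rfl
  · rw [ht_true] at h1; omega

/-- the max-index used in `mir` -/
def mj (e : List Bool) : ℕ :=
  ((List.range e.length).filter
      (fun j => (e.take j).count true = (e.take j).count false)).foldr max 0

lemma mir_unfold (w : List Bool) (hw : w ≠ []) :
    mir w = mir (w.dropLast.drop (mj w.dropLast + 1)) ++
      true :: (mir (w.dropLast.take (mj w.dropLast)) ++ [false]) := by
  rw [mir]; simp [hw, mj]

lemma le_foldr_max {l : List ℕ} {x : ℕ} (h : x ∈ l) : x ≤ l.foldr max 0 := by
  induction l with
  | nil => simp at h
  | cons a t ih =>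
    rcases List.mem_cons.1 h with rfl | h
    · exact le_max_left _ _
    · exact (ih h).trans (le_max_right _ _)

lemma foldr_max_mem_or {l : List ℕ} : l.foldr max 0 ∈ l ∨ l.foldr max 0 = 0 := by
  induction l with
  | nil => exact Or.inr rfl
  | cons a t ih =>
    simp only [List.foldr_cons]
    rcases le_total a (t.foldr max 0) with hle | hle
    · rw [max_eq_right hle]
      rcases ih with h | h
      · exact Or.inl (List.mem_cons_of_mem _ h)
      · rw [h]; rw [h] at hle; interval_cases a
        · exact Or.inr rfl
    · rw [max_eq_left hle]
      exact Or.inl List.mem_cons_self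

lemma foldr_max_mem {l : List ℕ} (h0 : (0:ℕ) ∈ l) : l.foldr max 0 ∈ l := by
  rcases foldr_max_mem_or (l := l) with h | h
  · exact h
  · rw [h]; exact h0

lemma mj_spec {A B : List Bool} (hA : IsDyck A) (hB : IsDyck B) :
    mj (A ++ true :: B) = A.length := by
  set e := A ++ true :: B with he
  set S := (List.range e.length).filter
      (fun j => (e.take j).count true = (e.take j).count false) with hS
  have hlen : e.length = A.length + 1 + B.length := by simp [he]; omega
  have hmemA : A.length ∈ S := by
    rw [hS, List.mem_filter]
    constructor
    · rw [List.mem_range]; omega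
    · have : e.take A.length = A := by rw [he]; exact List.take_left
      rw [this]
      simpa using decide_eq_true hA.1
  have hbound : ∀ i ∈ S, i ≤ A.length := by
    intro i hi
    by_contra hgt
    push_neg at hgt
    rw [hS, List.mem_filter, List.mem_range] at hi
    obtain ⟨hilt, hibal⟩ := hi
    have hbal : (e.take i).count true = (e.take i).count false := by
      simpa using hibal
    have htake : e.take i = A ++ true :: B.take (i - A.length - 1) := by
      rw [he, List.take_append]
      congr 1
      · rw [List.take_of_length_le (by omega)]
      · have h1 : i - A.length = (i - A.length - 1) + 1 := by omega
        rw [h1]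
        rfl
    have h0 : ht (e.take i) = 0 := by unfold ht; omega
    rw [htake, ht_append, ht_cons, hA.ht_eq] at h0
    have := hB.ht_prefix (List.take_prefix (i - A.length - 1) B)
    simp at h0
    omega
  have hin : mj e ∈ S := by
    apply foldr_max_mem
    rw [hS, List.mem_filter, List.mem_range]
    constructor
    · omega
    · simp
  have h1 : mj e ≤ A.length := hbound _ hin
  have h2 : A.length ≤ mj e := le_foldr_max hmemA
  omega

lemma mir_node {A B : List Bool} (hA : IsDyck A) (hB : IsDyck B) :
    mir (A ++ true :: (B ++ [false])) = mir B ++ true :: (mir A ++ [false]) := by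
  have hw : A ++ true :: (B ++ [false]) ≠ [] := by simp
  rw [mir_unfold _ hw]
  have hdl : (A ++ true :: (B ++ [false])).dropLast = A ++ true :: B := by
    have : A ++ true :: (B ++ [false]) = (A ++ true :: B) ++ [false] := by simp
    rw [this, List.dropLast_concat]
  rw [hdl, mj_spec hA hB]
  congr 2
  · rw [List.drop_append]
    rw [List.drop_of_length_le (by omega)]
    simp
  · rw [List.take_append, List.take_of_length_le (le_refl _)]
    simp

lemma isDyck_prefix {w p : List Bool} (hw : IsDyck w) (hp : p <+: w)
    (hbal : ht p = 0) : IsDyck p := by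
  rw [isDyck_iff]
  exact ⟨hbal, fun q hq => hw.ht_prefix (hq.trans hp)⟩

lemma exists_node {w : List Bool} (hw : IsDyck w) (hne : w ≠ []) :
    ∃ A B, IsDyck A ∧ IsDyck B ∧ w = A ++ true :: (B ++ [false]) := by
  obtain ⟨e, rfl⟩ := dyck_getLast hw hne
  have hept : e <+: e ++ [false] := List.prefix_append _ _
  have hhte : ht e = 1 := by
    have := hw.ht_eq
    rw [ht_append] at this
    simp [ht] at this ⊢
    omega
  have hene : e ≠ [] := by rintro rfl; simp [ht] at hhte
  set S := (List.range e.length).filter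
      (fun j => (e.take j).count true = (e.take j).count false) with hS
  have hjfold : S.foldr max 0 = mj e := rfl
  have h0S : (0:ℕ) ∈ S := by
    rw [hS, List.mem_filter, List.mem_range]
    exact ⟨List.length_pos_iff.2 hene, by simp⟩
  have hjS : mj e ∈ S := foldr_max_mem h0S
  rw [hS, List.mem_filter, List.mem_range] at hjS
  obtain ⟨hjlt, hjbal⟩ := hjS
  set j := mj e with hj
  set A := e.take j with hAdef
  have hAbal : ht A = 0 := by
    have : (A.count true) = A.count false := by simpa [hAdef] using hjbal
    unfold ht; omega
  have hApre : A <+: e := List.take_prefix _ _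
  have hA : IsDyck A := isDyck_prefix hw (hApre.trans hept) hAbal
  have hlenA : A.length = j := by rw [hAdef]; exact List.length_take_of_le (le_of_lt hjlt)
  have hdropne : e.drop j ≠ [] := by
    simp [List.drop_eq_nil_iff]
    omega
  obtain ⟨c, rest, hcr⟩ := List.exists_cons_of_ne_nil hdropne
  have he2 : e = A ++ c :: rest := by
    rw [hAdef, ← hcr, List.take_append_drop]
  have hc : c = true := by
    have hpre : A ++ [c] <+: e ++ [false] :=
      ⟨rest ++ [false], by rw [he2]; simp⟩
    have h0 := hw.ht_prefix hpre
    rw [ht_append, hAbal] at h0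
    cases c
    · rw [ht_false] at h0; omega
    · rfl
  subst hc
  set B := rest with hBdef
  have helen : e.length = A.length + 1 + B.length := by rw [he2]; simp; omega
  have hhtB : ht B = 0 := by
    rw [he2, ht_append, ht_cons, hAbal] at hhte
    simp at hhte; omega
  have hB : IsDyck B := by
    rw [isDyck_iff]
    refine ⟨hhtB, fun p hp => ?_⟩
    by_contra hneg
    push_neg at hneg
    obtain ⟨p', hp'⟩ := hp
    have hple : A ++ true :: p <+: e := by
      rw [he2, ← hp']
      exact ⟨p', by simp⟩
    have h0 := hw.ht_prefix (hple.trans hept)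
    rw [ht_append, ht_cons, hAbal] at h0
    simp at h0
    have hpm1 : ht p = -1 := by omega
    have hpne : p ≠ B := by rintro rfl; rw [hhtB] at hpm1; exact absurd hpm1 (by norm_num)
    have hplt : p.length < B.length := by
      have hle : p.length ≤ B.length := by rw [← hp']; simp
      rcases lt_or_eq_of_le hle with h | h
      · exact h
      · exact absurd (List.IsPrefix.eq_of_length ⟨p', hp'⟩ h) hpne
    have hlenle : j + 1 + p.length < e.length := by omega
    have htakeeq : e.take (j + 1 + p.length) = A ++ true :: p := by
      have he3 : e = (A ++ true :: p) ++ p' := by rw [he2, ← hp']; simp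
      have hl : (A ++ true :: p).length = j + 1 + p.length := by simp; omega
      rw [he3, List.take_append,
        List.take_of_length_le (le_of_eq hl)]
      simp [hl]
    have hbalAp : (e.take (j + 1 + p.length)).count true =
        (e.take (j + 1 + p.length)).count false := by
      rw [htakeeq]
      have : ht (A ++ true :: p) = 0 := by
        rw [ht_append, ht_cons, hAbal, hpm1]; simp
      unfold ht at this; omega
    have hmem : j + 1 + p.length ∈ S := by
      rw [hS, List.mem_filter, List.mem_range]
      exact ⟨hlenle, by simpa using hbalAp⟩
    have hle2 := le_foldr_max hmem
    rw [hjfold] at hle2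
    omega
  exact ⟨A, B, hA, hB, by rw [he2]; simp⟩

lemma mir_nil : mir [] = [] := by rw [mir]; rfl

lemma mir_spec_aux : ∀ n (w : List Bool), w.length = n → IsDyck w →
    IsDyck (mir w) ∧ (mir w).length = w.length ∧ (mir w).count true = w.count true := by
  intro n
  induction n using Nat.strong_induction_on with
  | _ n ih =>
    intro w hlen hw
    by_cases hne : w = []
    · subst hne; simp [mir_nil]; exact isDyck_nil
    · obtain ⟨A, B, hA, hB, hw2⟩ := exists_node hw hne
      have hlA : A.length < n := by rw [← hlen, hw2]; simp
      have hlB : B.length < n := by rw [← hlen, hw2]; simp; omega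
      obtain ⟨hdA, hlenA, hcA⟩ := ih A.length hlA A rfl hA
      obtain ⟨hdB, hlenB, hcB⟩ := ih B.length hlB B rfl hB
      rw [hw2, mir_node hA hB]
      refine ⟨isDyck_node hdB hdA, ?_, ?_⟩
      · simp [hlenA, hlenB]; try omega
      · simp [List.count_cons, List.count_append, hcA, hcB]; try omega

lemma mir_dyck {w : List Bool} (hw : IsDyck w) : IsDyck (mir w) :=
  (mir_spec_aux _ w rfl hw).1

lemma mir_length {w : List Bool} (hw : IsDyck w) : (mir w).length = w.length :=
  (mir_spec_aux _ w rfl hw).2.1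

lemma mir_count {w : List Bool} (hw : IsDyck w) : (mir w).count true = w.count true :=
  (mir_spec_aux _ w rfl hw).2.2

lemma mir_eq_nil_iff {w : List Bool} (hw : IsDyck w) : mir w = [] ↔ w = [] := by
  constructor
  · intro h
    have := mir_length hw
    rw [h] at this
    exact List.length_eq_zero_iff.1 this.symm
  · rintro rfl; exact mir_nil

/- dtype lemmas -/
lemma dtype_nil : dtype [] = [] := rfl
lemma dtype_singleton (a : Bool) : dtype [a] = [] := rfl

lemma dtype_cons_false (l : List Bool) : dtype (false :: l) = dtype l := by
  cases l with
  | nil => rfl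
  | cons b r => simp [dtype]

lemma dtype_cons_true (b : Bool) (rest : List Bool) :
    dtype (true :: b :: rest) = b :: dtype (b :: rest) := by
  simp [dtype]

lemma dtype_append_aux : ∀ e B : List Bool,
    dtype ((e ++ [false]) ++ B) = dtype (e ++ [false]) ++ dtype B := by
  intro e
  induction e with
  | nil => intro B; simp [dtype_cons_false, dtype_singleton]
  | cons a t iht =>
    intro B
    obtain ⟨c, r, hcr⟩ : ∃ c r, t ++ [false] = c :: r :=
      List.exists_cons_of_ne_nil (by simp)
    have h1 : ((a :: t) ++ [false]) ++ B = a :: c :: (r ++ B) := by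
      simp [hcr]
    have h2 : (a :: t) ++ [false] = a :: c :: r := by simp [hcr]
    have h3 := iht B
    rw [hcr] at h3
    rw [h1, h2]
    cases a
    · rw [dtype_cons_false, dtype_cons_false]
      simpa using h3
    · rw [dtype_cons_true, dtype_cons_true]
      rw [List.cons_append]
      simpa using h3

lemma dtype_append {A : List Bool} (B : List Bool) (h : ∃ e, A = e ++ [false]) :
    dtype (A ++ B) = dtype A ++ dtype B := by
  obtain ⟨e, rfl⟩ := h
  exact dtype_append_aux e B

lemma dyck_head {w : List Bool} (hw : IsDyck w) (hne : w ≠ []) :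
    ∃ r, w = true :: r := by
  obtain ⟨c, r, rfl⟩ := List.exists_cons_of_ne_nil hne
  have := hw.ht_prefix (show [c] <+: c :: r from ⟨r, rfl⟩)
  cases c
  · rw [ht_false] at this; omega
  · exact ⟨r, rfl⟩

lemma dtype_node_nil {A : List Bool} (hA : IsDyck A) (hAe : A = [] ∨ ∃ e, A = e ++ [false]) :
    dtype (A ++ [true, false]) = dtype A ++ [false] := by
  rcases hAe with rfl | he
  · rfl
  · rw [dtype_append [true, false] he]
    rfl

lemma dtype_node_cons {A B : List Bool} (hB : IsDyck B) (hBne : B ≠ [])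
    (hAe : A = [] ∨ ∃ e, A = e ++ [false]) (hBe : ∃ e, B = e ++ [false]) :
    dtype (A ++ true :: (B ++ [false])) = dtype A ++ true :: dtype B := by
  have hstep : dtype (true :: (B ++ [false])) = true :: dtype B := by
    obtain ⟨r, hr⟩ := dyck_head hB hBne
    have : B ++ [false] = true :: (r ++ [false]) := by rw [hr]; simp
    rw [this, dtype_cons_true, ← this, dtype_append [false] hBe]
    simp [dtype_singleton]
  rcases hAe with rfl | he
  · simpa [dtype_nil] using hstep
  · rw [dtype_append (true :: (B ++ [false])) he, hstep]

lemma dyck_last_or {w : List Bool} (hw : IsDyck w) : w = [] ∨ ∃ e, w = e ++ [false] := by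
  by_cases h : w = []
  · exact Or.inl h
  · exact Or.inr (dyck_getLast hw h)

/-- the type of a nonempty Dyck path ends in `false` -/
lemma dtype_last : ∀ n (w : List Bool), w.length = n → IsDyck w → w ≠ [] →
    ∃ g, dtype w = g ++ [false] := by
  intro n
  induction n using Nat.strong_induction_on with
  | _ n ih =>
    intro w hlen hw hne
    obtain ⟨A, B, hA, hB, rfl⟩ := exists_node hw hne
    by_cases hBne : B = []
    · subst hBne
      refine ⟨dtype A, ?_⟩
      simpa using dtype_node_nil hA (dyck_last_or hA)
    · obtain ⟨gB, hgB⟩ := ih B.length (by simp [← hlen]; omega) B rfl hB hBne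
      refine ⟨dtype A ++ true :: gB, ?_⟩
      rw [dtype_node_cons hB hBne (dyck_last_or hA) (dyck_getLast hB hBne), hgB]
      simp

/-- reduced type -/
def Rt (w : List Bool) : List Bool := (dtype w).dropLast

lemma dtype_eq_rt {w : List Bool} (hw : IsDyck w) (hne : w ≠ []) :
    dtype w = Rt w ++ [false] := by
  obtain ⟨g, hg⟩ := dtype_last _ w rfl hw hne
  rw [Rt, hg, List.dropLast_concat]

lemma dropLast_cons_concat (a b : Bool) (l : List Bool) :
    (a :: (l ++ [b])).dropLast = a :: l := by
  rw [← List.cons_append, List.dropLast_concat]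

lemma rt_mir_aux : ∀ n (w : List Bool), w.length = n → IsDyck w →
    Rt (mir w) = ((Rt w).reverse).map not := by
  intro n
  induction n using Nat.strong_induction_on with
  | _ n ih =>
    intro w hlen hw
    by_cases hne : w = []
    · subst hne; simp [mir_nil, Rt, dtype_nil]
    · obtain ⟨A, B, hA, hB, rfl⟩ := exists_node hw hne
      have hlA : A.length < n := by rw [← hlen]; simp
      have hlB : B.length < n := by rw [← hlen]; simp; omega
      have ihA := ih A.length hlA A rfl hA
      have ihB := ih B.length hlB B rfl hB
      have hmA := mir_dyck hA
      have hmB := mir_dyck hB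
      have hmir : mir (A ++ true :: (B ++ [false])) = mir B ++ true :: (mir A ++ [false]) :=
        mir_node hA hB
      by_cases hAne : A = []
      · subst hAne
        by_cases hBne : B = []
        · subst hBne
          have hm2 : mir [true, false] = [true, false] := by simpa [mir_nil] using hmir
          have : ([]:List Bool) ++ true :: ([] ++ [false]) = [true, false] := rfl
          rw [this, Rt, Rt, hm2]; rfl
        · have hmBne : mir B ≠ [] := fun h => hBne ((mir_eq_nil_iff hB).1 h)
          -- w = [] u B d : Rt w = true :: Rt B ; mir w = mir B u [] d : Rt (mir w) = Rt (mir B) ++ [false]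
          have h1 : dtype ([] ++ true :: (B ++ [false])) = true :: dtype B := by
            rw [dtype_node_cons hB hBne (Or.inl rfl) (dyck_getLast hB hBne)]; rfl
          have h2 : dtype (mir B ++ [true, false]) = dtype (mir B) ++ [false] :=
            dtype_node_nil hmB (dyck_last_or hmB)
          have h3 : mir ([] ++ true :: (B ++ [false])) = mir B ++ [true, false] := by
            rw [hmir, mir_nil]; rfl
          rw [Rt, h3, h2, Rt, h1]
          rw [dtype_eq_rt hB hBne, dtype_eq_rt hmB hmBne]
          simp [ihB, dropLast_cons_concat]
      · have hmAne : mir A ≠ [] := fun h => hAne ((mir_eq_nil_iff hA).1 h)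
        by_cases hBne : B = []
        · subst hBne
          have h1 : dtype (A ++ [true, false]) = dtype A ++ [false] :=
            dtype_node_nil hA (dyck_last_or hA)
          have h2 : dtype ([] ++ true :: (mir A ++ [false])) = true :: dtype (mir A) := by
            rw [dtype_node_cons hmA hmAne (Or.inl rfl) (dyck_getLast hmA hmAne)]; rfl
          have h3 : mir (A ++ true :: ([] ++ [false])) = [] ++ true :: (mir A ++ [false]) := by
            rw [hmir, mir_nil]
          have h4 : A ++ true :: ([] : List Bool) ++ [false] = A ++ [true, false] := by simp
          rw [Rt, h3, h2, Rt]
          have h5 : dtype (A ++ true :: (([]:List Bool) ++ [false])) = dtype A ++ [false] := by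
            simpa using h1
          rw [h5]
          rw [dtype_eq_rt hA hAne, dtype_eq_rt hmA hmAne]
          simp [ihA, dropLast_cons_concat]
        · have hmBne : mir B ≠ [] := fun h => hBne ((mir_eq_nil_iff hB).1 h)
          have h1 : dtype (A ++ true :: (B ++ [false])) = dtype A ++ true :: dtype B :=
            dtype_node_cons hB hBne (dyck_last_or hA) (dyck_getLast hB hBne)
          have h2 : dtype (mir B ++ true :: (mir A ++ [false])) =
              dtype (mir B) ++ true :: dtype (mir A) :=
            dtype_node_cons hmA hmAne (dyck_last_or hmB) (dyck_getLast hmA hmAne)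
          rw [Rt, hmir, h2, Rt, h1]
          rw [dtype_eq_rt hA hAne, dtype_eq_rt hB hBne,
            dtype_eq_rt hmA hmAne, dtype_eq_rt hmB hmBne]
          simp [ihA, ihB, dropLast_cons_concat]

lemma rt_mir {w : List Bool} (hw : IsDyck w) :
    Rt (mir w) = ((Rt w).reverse).map not :=
  rt_mir_aux _ w rfl hw

lemma tcov_context {X Y : List Bool} (C E : List Bool) (h : TCov X Y) :
    TCov (C ++ X ++ E) (C ++ Y ++ E) := by
  obtain ⟨V, W, D1, hD1, hne⟩ := h
  have h1 : C ++ (V ++ false :: (D1 ++ W)) ++ E =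
      (C ++ V) ++ false :: (D1 ++ (W ++ E)) := by simp
  have h2 : C ++ (V ++ D1 ++ false :: W) ++ E =
      (C ++ V) ++ D1 ++ false :: (W ++ E) := by simp
  rw [h1, h2]
  exact TCov.mk (C ++ V) (W ++ E) D1 hD1 hne

lemma tamari_context {X Y : List Bool} (C E : List Bool) (h : TamariLE X Y) :
    TamariLE (C ++ X ++ E) (C ++ Y ++ E) := by
  induction h with
  | refl => exact Relation.ReflTransGen.refl
  | tail _ hbc ihr => exact ihr.tail (tcov_context C E hbc)

lemma tcov_dyck {D D' : List Bool} (h : TCov D D') (hD : IsDyck D) : IsDyck D' := by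
  obtain ⟨V, W, D1, hD1, hne⟩ := h
  rw [isDyck_iff] at hD ⊢
  obtain ⟨hbal, hpre⟩ := hD
  constructor
  · simp only [ht_append, ht_cons] at hbal ⊢
    simp at hbal ⊢
    omega
  · intro p hp
    have hVfa : 0 ≤ ht V - 1 := by
      have : V ++ [false] <+: V ++ false :: (D1 ++ W) := by
        refine ⟨D1 ++ W, ?_⟩; simp
      have := hpre _ this
      rw [ht_append, ht_false] at this
      omega
    rcases prefix_split hp with h1 | ⟨q, hq, rfl⟩
    · rcases prefix_split h1 with h2 | ⟨r, hr, rfl⟩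
      · exact hpre _ (h2.trans ⟨false :: (D1 ++ W), by simp⟩)
      · have := hD1.ht_prefix hr
        rw [ht_append]
        omega
    · rcases prefix_cons_split hq with rfl | ⟨r, hr, rfl⟩
      · have h0 := hD1.ht_eq
        simp only [ht_append, ht_nil]
        omega
      · have hp' : V ++ false :: (D1 ++ r) <+: V ++ false :: (D1 ++ W) := by
          obtain ⟨s, rfl⟩ := hr
          exact ⟨s, by simp⟩
        have := hpre _ hp'
        simp only [ht_append, ht_cons] at this ⊢
        simp at this ⊢
        omega

lemma tamari_single {D D' : List Bool} (h : TCov D D') : TamariLE D' D :=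
  Relation.ReflTransGen.single h

/-- The crossing case: the moved `false` closes exactly at the last contact. -/
lemma case_cross {V B1 : List Bool} (hA : IsDyck (V ++ [false])) (hB1 : IsDyck B1) :
    TamariLE (mir ((V ++ [false]) ++ true :: (B1 ++ [false])))
      (mir (V ++ (true :: (B1 ++ [false])) ++ false :: ([] : List Bool))) := by
  obtain ⟨A', V2, hA', hV2, hVdec⟩ := exists_node hA (by simp)
  have hV : V = A' ++ true :: V2 := by
    have h1 : V ++ [false] = (A' ++ true :: V2) ++ [false] := by rw [hVdec]; simp
    exact List.append_cancel_right h1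
  have hmirA : mir (V ++ [false]) = mir V2 ++ true :: (mir A' ++ [false]) := by
    rw [hVdec]; exact mir_node hA' hV2
  have hmirD : mir ((V ++ [false]) ++ true :: (B1 ++ [false])) =
      mir B1 ++ true :: ((mir V2 ++ true :: (mir A' ++ [false])) ++ [false]) := by
    rw [mir_node hA hB1, hmirA]
  set B' : List Bool := V2 ++ true :: (B1 ++ [false]) with hB'
  have hB'd : IsDyck B' := isDyck_node hV2 hB1
  have hD'eq : V ++ (true :: (B1 ++ [false])) ++ false :: ([] : List Bool) =
      A' ++ true :: (B' ++ [false]) := by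
    rw [hV, hB']; simp
  have hmirD' : mir (V ++ (true :: (B1 ++ [false])) ++ false :: ([] : List Bool)) =
      (mir B1 ++ true :: (mir V2 ++ [false])) ++ true :: (mir A' ++ [false]) := by
    rw [hD'eq, mir_node hA' hB'd, hB', mir_node hV2 hB1]
  rw [hmirD, hmirD']
  apply tamari_single
  have hcov := TCov.mk (mir B1 ++ true :: mir V2) [] (true :: (mir A' ++ [false]))
    (by simpa using isDyck_node isDyck_nil (mir_dyck hA')) (by simp)
  have e1 : (mir B1 ++ true :: mir V2) ++ false :: ((true :: (mir A' ++ [false])) ++ []) =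
      (mir B1 ++ true :: (mir V2 ++ [false])) ++ true :: (mir A' ++ [false]) := by simp
  have e2 : (mir B1 ++ true :: mir V2) ++ (true :: (mir A' ++ [false])) ++ false :: [] =
      mir B1 ++ true :: ((mir V2 ++ true :: (mir A' ++ [false])) ++ [false]) := by simp
  rw [e1, e2] at hcov
  exact hcov

lemma crux : ∀ N : ℕ, ∀ D V W D1 : List Bool, D.length + D1.length ≤ N →
    IsDyck D → IsDyck D1 → D1 ≠ [] → D = V ++ false :: (D1 ++ W) →
    TamariLE (mir D) (mir (V ++ D1 ++ false :: W)) := by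
  intro N
  induction N with
  | zero =>
    intro D V W D1 hN _ _ hne _
    have := List.length_pos_iff.2 hne
    omega
  | succ N ihN =>
    intro D V W D1 hN hD hD1 hne hDeq
    obtain ⟨A1, B1, hA1, hB1, hD1eq⟩ := exists_node hD1 hne
    have hlD1 : D1.length = A1.length + B1.length + 2 := by rw [hD1eq]; simp; omega
    by_cases hA1ne : A1 = []
    · -- elementary rewrite: D1 = true :: (B1 ++ [false])
      subst hA1ne
      rw [List.nil_append] at hD1eq
      -- decompose D
      have hDne : D ≠ [] := by rw [hDeq]; simp
      obtain ⟨A, B, hA, hB, hDAB⟩ := exists_node hD hDne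
      have hlD : D.length = A.length + B.length + 2 := by rw [hDAB]; simp; omega
      have hkey : A ++ (true :: (B ++ [false])) = V ++ (false :: (D1 ++ W)) := by
        rw [← hDAB, hDeq]
      rcases List.append_eq_append_iff.1 hkey with ⟨T, hT1, hT2⟩ | ⟨T, hT1, hT2⟩
      · -- V = A ++ T : the pattern is inside `B` (or contradiction)
        cases T with
        | nil => simp at hT2
        | cons t T2 =>
          rw [List.cons_append] at hT2
          injection hT2 with ht1 hT2
          subst ht1
          rcases List.append_eq_append_iff.1 hT2 with ⟨U, hU1, hU2⟩ | ⟨U, hU1, hU2⟩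
          · -- T2 = B ++ U, [false] = U ++ false :: (D1 ++ W) : length contra
            have hl := congrArg List.length hU2
            have := List.length_pos_iff.2 hne
            simp at hl
            omega
          · -- B = T2 ++ U, false :: (D1 ++ W) = U ++ [false]
            cases U with
            | nil =>
              simp at hU2
              exact absurd hU2.1 hne
            | cons u U2 =>
              rw [List.cons_append] at hU2
              injection hU2 with hu1 hU2
              subst hu1
              -- D1 ++ W = U2 ++ [false], B = T2 ++ false :: U2
              have hcase2 : ∃ Z, B = T2 ++ false :: (D1 ++ Z) ∧ W = Z ++ [false] := by
                rcases List.append_eq_append_iff.1 hU2 with ⟨Z, hZ1, hZ2⟩ | ⟨Z, hZ1, hZ2⟩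
                · exact ⟨Z, by rw [hU1, hZ1], hZ2⟩
                · cases Z with
                  | nil =>
                    simp at hZ1 hZ2
                    refine ⟨[], by rw [hU1, hZ1]; simp, by simp [← hZ2]⟩
                  | cons z Z2 =>
                    exfalso
                    rw [List.cons_append] at hZ2
                    injection hZ2 with hz1 hZ2
                    subst hz1
                    have hZ2' : Z2 = [] ∧ W = [] := by
                      constructor
                      · cases Z2 with
                        | nil => rfl
                        | cons _ _ => simp at hZ2
                      · cases Z2 with
                        | nil => simpa using hZ2.symm
                        | cons _ _ => simp at hZ2
                    obtain ⟨rfl, rfl⟩ := hZ2'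
                    -- D1 = U2 ++ [false], D1 = true :: (B1 ++ [false])
                    have hU2eq : U2 = true :: B1 := by
                      have h1 : U2 ++ [false] = (true :: B1) ++ [false] := by
                        rw [← hZ1, hD1eq]; simp
                      exact List.append_cancel_right h1
                    -- B = T2 ++ false :: true :: B1 : contradiction
                    have hBeq : B = T2 ++ false :: true :: B1 := by rw [hU1, hU2eq]
                    have hhtB : ht B = 0 := by
                      have h1 := hD.ht_eq
                      rw [hDAB, ht_append, ht_cons, ht_append, hA.ht_eq] at h1
                      simp [ht] at h1 ⊢
                      omega
                    have hhtB1 : ht B1 = 0 := by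
                      have h1 := hD1.ht_eq
                      rw [hD1eq, ht_cons, ht_append] at h1
                      simp [ht] at h1 ⊢
                      omega
                    have hhtT2 : ht T2 = 0 := by
                      rw [hBeq, ht_append, ht_cons, ht_cons] at hhtB
                      simp at hhtB
                      omega
                    have hpre : T2 ++ [false] <+: B := ⟨true :: B1, by rw [hBeq]; simp⟩
                    have := hB.ht_prefix hpre
                    rw [ht_append, ht_false, hhtT2] at this
                    omega
              obtain ⟨Z, hBeq, hWeq⟩ := hcase2
              -- CASE 2 : rewrite happens inside B
              have hVeq : V = A ++ true :: T2 := hT1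
              set B'' : List Bool := T2 ++ D1 ++ false :: Z with hB''
              have hcovB : TCov B B'' := by
                rw [hBeq, hB'']
                exact TCov.mk T2 Z D1 hD1 hne
              have hB''d : IsDyck B'' := tcov_dyck hcovB hB
              have hih : TamariLE (mir B) (mir B'') :=
                ihN B T2 Z D1 (by omega) hB hD1 hne hBeq
              have hmirD : mir D = mir B ++ true :: (mir A ++ [false]) := by
                rw [hDAB]; exact mir_node hA hB
              have hD'eq : V ++ D1 ++ false :: W = A ++ true :: (B'' ++ [false]) := by
                rw [hVeq, hWeq, hB'']; simp
              have hmirD' : mir (V ++ D1 ++ false :: W) = mir B'' ++ true :: (mir A ++ [false]) := by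
                rw [hD'eq]; exact mir_node hA hB''d
              rw [hmirD, hmirD']
              have := tamari_context [] (true :: (mir A ++ [false])) hih
              simpa using this
      · -- A = V ++ T
        cases T with
        | nil => simp at hT2
        | cons t T' =>
          rw [List.cons_append] at hT2
          injection hT2 with ht1 hT2
          subst ht1
          -- D1 ++ W = T' ++ true :: (B ++ [false]), A = V ++ false :: T'
          have hcase1 : (∃ U, A = V ++ false :: (D1 ++ U) ∧ W = U ++ true :: (B ++ [false]))
              ∨ (T' = [] ∧ B = B1 ∧ W = []) := by
            rcases List.append_eq_append_iff.1 hT2 with ⟨U, hU1, hU2⟩ | ⟨U, hU1, hU2⟩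
            · exact Or.inl ⟨U, by rw [hT1, hU1], hU2⟩
            · by_cases hUne : U = []
              · subst hUne
                rw [List.append_nil] at hU1
                exact Or.inl ⟨[], by rw [hT1, hU1]; simp, by simpa using hU2.symm⟩
              · -- crossing : T' proper prefix of D1
                have hT'D1 : D1 = T' ++ U := hU1
                have hhtT' : ht T' = 0 := by
                  have h1 : 0 ≤ ht T' := by
                    have := hD1.ht_prefix (⟨U, hT'D1.symm⟩ : T' <+: D1)
                    omega
                  have h2 : 0 ≤ ht V - 1 := by
                    have hp : V ++ false :: D1 <+: D := ⟨W, by rw [hDeq]; simp⟩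
                    have := hD.ht_prefix hp
                    rw [ht_append, ht_cons, hD1.ht_eq] at this
                    simp at this
                    omega
                  have h3 : ht V - 1 + ht T' = 0 := by
                    have := hA.ht_eq
                    rw [hT1, ht_append, ht_cons] at this
                    simp at this
                    omega
                  omega
                have hT'nil : T' = [] := by
                  by_contra hT'ne
                  obtain ⟨c, p, rfl⟩ := List.exists_cons_of_ne_nil hT'ne
                  have hc : c = true ∧ B1 ++ [false] = p ++ U := by
                    rw [hD1eq, List.cons_append] at hT'D1
                    injection hT'D1 with h1 h2
                    exact ⟨h1.symm, h2⟩
                  obtain ⟨rfl, hpu⟩ := hc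
                  have hhtp : ht p = -1 := by
                    rw [ht_cons] at hhtT'
                    simp at hhtT'
                    omega
                  rcases prefix_split (⟨U, hpu.symm⟩ : p <+: B1 ++ [false]) with h1 | ⟨s, hs, rfl⟩
                  · have := hB1.ht_prefix h1
                    omega
                  · rcases prefix_cons_split hs with rfl | ⟨s2, hs2, rfl⟩
                    · rw [ht_append, hB1.ht_eq] at hhtp
                      simp [ht] at hhtp
                    · rw [List.prefix_nil] at hs2
                      subst hs2
                      -- p = B1 ++ [false], so U = []
                      have : U = [] := by
                        have h1 := congrArg List.length hpu
                        simp at h1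
                        cases U with
                        | nil => rfl
                        | cons _ _ => simp at h1
                      exact hUne this
                subst hT'nil
                rw [List.nil_append] at hT'D1
                subst hT'D1
                -- true :: (B ++ [false]) = D1 ++ W with D1 = true :: (B1 ++ [false])
                rw [hD1eq] at hU2
                rw [List.cons_append] at hU2
                injection hU2 with _ hU2
                -- B ++ [false] = (B1 ++ [false]) ++ W
                cases W with
                | nil =>
                  refine Or.inr ⟨rfl, ?_, rfl⟩
                  rw [List.append_nil] at hU2
                  exact List.append_cancel_right hU2
                | cons w W2 =>
                  exfalso
                  have hl := congrArg List.length hU2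
                  simp at hl
                  have hpre : B1 ++ [false] <+: B := by
                    apply List.prefix_of_prefix_length_le (l₃ := B ++ [false])
                    · exact ⟨w :: W2, by rw [hU2]⟩
                    · exact ⟨[false], rfl⟩
                    · simp; omega
                  have := hB.ht_prefix hpre
                  rw [ht_append, hB1.ht_eq, ht_false] at this
                  omega
          rcases hcase1 with ⟨U, hAeq, hWeq⟩ | ⟨hT'nil, hBeq, hWnil⟩
          · -- CASE 1 : rewrite happens inside A
            set A'' : List Bool := V ++ D1 ++ false :: U with hA''
            have hcovA : TCov A A'' := by
              rw [hAeq, hA'']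
              exact TCov.mk V U D1 hD1 hne
            have hA''d : IsDyck A'' := tcov_dyck hcovA hA
            have hih : TamariLE (mir A) (mir A'') :=
              ihN A V U D1 (by omega) hA hD1 hne hAeq
            have hmirD : mir D = mir B ++ true :: (mir A ++ [false]) := by
              rw [hDAB]; exact mir_node hA hB
            have hD'eq : V ++ D1 ++ false :: W = A'' ++ true :: (B ++ [false]) := by
              rw [hWeq, hA'']; simp
            have hmirD' : mir (V ++ D1 ++ false :: W) = mir B ++ true :: (mir A'' ++ [false]) := by
              rw [hD'eq]; exact mir_node hA''d hB
            rw [hmirD, hmirD']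
            have := tamari_context (mir B ++ [true]) [false] hih
            simpa using this
          · -- crossing case
            subst hT'nil hWnil hBeq
            have hDeq2 : D = (V ++ [false]) ++ true :: (B ++ [false]) := by
              rw [hDAB, hT1]
            have hAVf : IsDyck (V ++ [false]) := by rw [← hT1]; exact hA
            have := case_cross hAVf hB1
            rw [← hDeq2, ← hD1eq] at this
            exact this
    · -- A1 ≠ [] : split the rewrite into two smaller ones
      have hl1 : 1 ≤ A1.length := by
        have := List.length_pos_iff.2 hA1ne; omega
      set E1 : List Bool := true :: (B1 ++ [false]) with hE1
      have hE1d : IsDyck E1 := by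
        have := isDyck_node isDyck_nil hB1
        simpa [hE1] using this
      have hE1ne : E1 ≠ [] := by simp [hE1]
      have hstep1 : TamariLE (mir D) (mir (V ++ A1 ++ false :: (E1 ++ W))) := by
        apply ihN D V (E1 ++ W) A1 (by omega) hD hA1 hA1ne
        rw [hDeq, hD1eq, hE1]
        simp
      set D'' : List Bool := V ++ A1 ++ false :: (E1 ++ W) with hD''
      have hcov : TCov D D'' := by
        rw [hDeq, hD1eq, hD'', hE1]
        have := TCov.mk V (E1 ++ W) A1 hA1 hA1ne
        rw [hE1] at this
        convert this using 2 <;> simp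
      have hD''d : IsDyck D'' := tcov_dyck hcov hD
      have hlD'' : D''.length = D.length := by
        rw [hD'', hDeq, hD1eq, hE1]
        simp
        omega
      have hstep2 : TamariLE (mir D'') (mir ((V ++ A1) ++ E1 ++ false :: W)) := by
        apply ihN D'' (V ++ A1) W E1 (by rw [hlD'']; simp [hE1]; omega) hD''d hE1d hE1ne
        rw [hD'']
      have heq : (V ++ A1) ++ E1 ++ false :: W = V ++ D1 ++ false :: W := by
        rw [hD1eq, hE1]
        simp
      rw [heq] at hstep2
      exact hstep1.trans hstep2

lemma tcov_mir {D D' : List Bool} (hD : IsDyck D) (h : TCov D D') :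
    TamariLE (mir D) (mir D') := by
  obtain ⟨V, W, D1, hD1, hne⟩ := h
  exact crux ((V ++ false :: (D1 ++ W)).length + D1.length) _ V W D1 le_rfl hD hD1 hne rfl

lemma tam_rev {P Q : List Bool} (h : TamariLE P Q) :
    IsDyck Q → IsDyck P ∧ TamariLE (mir Q) (mir P) := by
  induction h with
  | refl => exact fun hQ => ⟨hQ, Relation.ReflTransGen.refl⟩
  | @tail b c hPb hcb ih =>
    intro hc
    have hb : IsDyck b := tcov_dyck hcb hc
    obtain ⟨hP, hm⟩ := ih hb
    exact ⟨hP, (tcov_mir hc hcb).trans hm⟩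

lemma length_eq_counts (w : List Bool) : w.length = w.count true + w.count false := by
  induction w with
  | nil => rfl
  | cons a t iht =>
    cases a <;> simp only [List.count_cons, List.length_cons, iht] <;> simp <;> omega

theorem stmt11' (P Q : List Bool) (hP : IsDyck P) (hQ : IsDyck Q)
    (hsize : P.count true = Q.count true) :
    (TypeEq P Q → TypeEq (mir P) (mir Q)) ∧
    (Synchronized P Q → Synchronized (mir Q) (mir P)) := by
  constructor
  · intro hT
    have h1 := rt_mir hP
    have h2 := rt_mir hQ
    have hRt : Rt P = Rt Q := hT
    show Rt (mir P) = Rt (mir Q)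
    rw [h1, h2, hRt]
  · rintro ⟨_, _, hPne, _, hle, hT⟩
    have hQne : Q ≠ [] := by
      intro hq
      subst hq
      have h1 := length_eq_counts P
      have h2 := hP.1
      simp at hsize
      have : P.length = 0 := by omega
      exact hPne (List.length_eq_zero_iff.1 this)
    have hmQne : mir Q ≠ [] := fun h => hQne ((mir_eq_nil_iff hQ).1 h)
    obtain ⟨hPd, hmle⟩ := tam_rev hle hQ
    refine ⟨mir_dyck hQ, mir_dyck hP, hmQne, ?_, hmle, ?_⟩
    · rw [mir_count hQ, mir_count hP, hsize]
    · have h1 := rt_mir hP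
      have h2 := rt_mir hQ
      have hRt : Rt P = Rt Q := hT
      show Rt (mir Q) = Rt (mir P)
      rw [h1, h2, hRt]


theorem stmt11 (P Q : List Bool) (hP : IsDyck P) (hQ : IsDyck Q)
    (hsize : P.count true = Q.count true) :
    (TypeEq P Q → TypeEq (mir P) (mir Q)) ∧
    (Synchronized P Q → Synchronized (mir Q) (mir P)) := by
  exact stmt11' P Q hP hQ hsize
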